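/- Degree bound on the inverse transformation: let A ∈ S^{n×n} have full row rank with deg_D A_{ij} ≤ d for all i,j, and let U·A = H with U unimodular and H in Hermite form. Then V := U^{-1} satisfies A = V·H and deg_D V_{ij} ≤ d for all i, j. -/

import Mathlib

/-- Abstract presentation of a skew (Ore/differential) polynomial ring `S = K[D; δ]`:
`S` is a ring containing `K` via `ι`, with a distinguished element `D` satisfying the
commutation rule `D * a = a * D + δ a`, and every element of `S` is (uniquely) a finite
sum `∑ aₙ Dⁿ`, with coefficients `coeff` supported on `supp`. -/
structure DiffPolyRing (K : Type) [CommRing K] (S : Type) [Ring S] (δ : K → K) where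
  ι : K →+* S
  D : S
  comm_rule : ∀ a : K, D * ι a = ι a * D + ι (δ a)
  coeff : S → ℕ → K
  supp : S → Finset ℕ
  mem_supp : ∀ f n, n ∈ supp f ↔ coeff f n ≠ 0
  coeff_add : ∀ f g n, coeff (f + g) n = coeff f n + coeff g n
  coeff_ext : ∀ f g : S, (∀ n, coeff f n = coeff g n) → f = g
  coeff_monomial : ∀ (a : K) (i n : ℕ), coeff (ι a * D ^ i) n = if n = i then a else 0
  repr_sum : ∀ f : S, f = ∑ n ∈ supp f, ι (coeff f n) * D ^ n

namespace DiffPolyRing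

variable {K S : Type} [CommRing K] [Ring S] {δ : K → K}

/-- Degree in the variable `D`, with `degD 0 = ⊥` (i.e. `-∞`). -/
noncomputable def degD (R : DiffPolyRing K S δ) (f : S) : WithBot ℕ := (R.supp f).max

/-- Degree in `D` as a natural number (`0` for the zero polynomial). -/
noncomputable def natDegD (R : DiffPolyRing K S δ) (f : S) : ℕ := (R.degD f).unbotD 0

/-- `f` is monic: its leading coefficient (in `D`) is `1`. -/
noncomputable def Monic (R : DiffPolyRing K S δ) (f : S) : Prop :=
  R.coeff f (R.natDegD f) = 1

/-- `H` is in Hermite form: upper triangular, monic diagonal entries, and each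
off-diagonal entry has `D`-degree strictly less than the diagonal entry below it. -/
noncomputable def HermiteForm (R : DiffPolyRing K S δ) {n : ℕ}
    (H : Matrix (Fin n) (Fin n) S) : Prop :=
  (∀ i j, j < i → H i j = 0) ∧ (∀ i, R.Monic (H i i)) ∧
    (∀ i j, i < j → R.degD (H i j) < R.degD (H j j))

/-- The rows of `A` are left `S`-linearly independent. -/
def FullRowRank {n : ℕ} (A : Matrix (Fin n) (Fin n) S) : Prop :=
  ∀ c : Fin n → S, (∀ j, (∑ i, c i * A i j) = 0) → c = 0

end DiffPolyRing


namespace DiffPolyRing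

variable {K S : Type} [CommRing K] [Ring S] {δ : K → K}

variable (R : DiffPolyRing K S δ)

lemma coeff_zero' (n : ℕ) : R.coeff 0 n = 0 := by
  have h := R.coeff_monomial 0 0 n
  simpa using h

noncomputable def coeffHom (n : ℕ) : S →+ K where
  toFun f := R.coeff f n
  map_zero' := R.coeff_zero' n
  map_add' f g := R.coeff_add f g n

lemma coeff_sum {α : Type*} (s : Finset α) (f : α → S) (n : ℕ) :
    R.coeff (∑ i ∈ s, f i) n = ∑ i ∈ s, R.coeff (f i) n :=
  map_sum (R.coeffHom n) f s

lemma eq_zero_of_coeff (f : S) (h : ∀ n, R.coeff f n = 0) : f = 0 :=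
  R.coeff_ext f 0 (fun n => by rw [h, R.coeff_zero'])

lemma le_degD {f : S} {n : ℕ} (h : R.coeff f n ≠ 0) : (n : WithBot ℕ) ≤ R.degD f :=
  Finset.le_max ((R.mem_supp f n).2 h)

lemma coeff_eq_zero_of_degD_lt {f : S} {n : ℕ} (h : R.degD f < (n : WithBot ℕ)) :
    R.coeff f n = 0 := by
  by_contra hc
  exact absurd (R.le_degD hc) (not_le.2 h)


lemma mem_supp_le {f : S} {nf p : ℕ} (hf : R.degD f ≤ (nf : WithBot ℕ))
    (hp : p ∈ R.supp f) : p ≤ nf := by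
  have h := le_trans (Finset.le_max hp) hf
  rw [Nat.cast_withBot] at h
  exact WithBot.coe_le_coe.mp h

lemma degD_zero : R.degD 0 = ⊥ := by
  have h : R.supp 0 = ∅ := by
    ext n; simp [R.mem_supp, R.coeff_zero']
  simp [degD, h]

lemma degD_le_natDegD (f : S) : R.degD f ≤ (R.natDegD f : WithBot ℕ) := by
  cases h : R.degD f with
  | bot => exact bot_le
  | coe m => simp [natDegD, h, Nat.cast_withBot]

lemma natDegD_spec {f : S} (hf : f ≠ 0) :
    R.degD f = (R.natDegD f : WithBot ℕ) ∧ R.coeff f (R.natDegD f) ≠ 0 := by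
  have hne : (R.supp f).Nonempty := by
    rcases Finset.eq_empty_or_nonempty (R.supp f) with h | h
    · exfalso; apply hf; apply R.eq_zero_of_coeff; intro n
      by_contra hc
      have hm : n ∈ R.supp f := (R.mem_supp f n).2 hc
      simp [h] at hm
    · exact h
  have hmax : R.degD f = ((R.supp f).max' hne : WithBot ℕ) := (Finset.coe_max' hne).symm
  have hnat : R.natDegD f = (R.supp f).max' hne := by
    simp [natDegD, hmax, Nat.cast_withBot]
  refine ⟨by rw [hnat]; exact hmax, ?_⟩
  rw [hnat]
  exact (R.mem_supp f _).1 (Finset.max'_mem _ hne)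

lemma monic_ne_zero [Nontrivial K] {f : S} (hf : R.Monic f) : f ≠ 0 := by
  intro h
  rw [h] at hf
  unfold Monic at hf
  rw [R.coeff_zero'] at hf
  exact zero_ne_one hf

lemma D_pow_mul (b : K) (i : ℕ) :
    ∃ c : ℕ → K, c i = b ∧ R.D ^ i * R.ι b = ∑ k ∈ Finset.range (i + 1), R.ι (c k) * R.D ^ k := by
  induction i with
  | zero => exact ⟨fun _ => b, rfl, by simp⟩
  | succ i ih =>
    obtain ⟨c, hci, hc⟩ := ih
    refine ⟨fun k => (if k = 0 then 0 else c (k - 1)) + (if k ≤ i then δ (c k) else 0), ?_, ?_⟩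
    · simp [hci]
    · have h1 : R.D ^ (i + 1) * R.ι b = R.D * (R.D ^ i * R.ι b) := by
        rw [pow_succ', mul_assoc]
      rw [h1, hc, Finset.mul_sum]
      have h2 : ∀ k, R.D * (R.ι (c k) * R.D ^ k)
          = R.ι (c k) * R.D ^ (k + 1) + R.ι (δ (c k)) * R.D ^ k := by
        intro k
        rw [← mul_assoc, R.comm_rule, add_mul, mul_assoc, ← pow_succ']
      have hsplit : ∀ (g h : ℕ → K) (s : Finset ℕ),
          (∑ k ∈ s, R.ι (g k + h k) * R.D ^ k)
            = (∑ k ∈ s, R.ι (g k) * R.D ^ k) + ∑ k ∈ s, R.ι (h k) * R.D ^ k := by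
        intro g h s
        rw [← Finset.sum_add_distrib]
        exact Finset.sum_congr rfl fun k _ => by rw [map_add, add_mul]
      calc ∑ k ∈ Finset.range (i + 1), R.D * (R.ι (c k) * R.D ^ k)
          = ∑ k ∈ Finset.range (i + 1),
              (R.ι (c k) * R.D ^ (k + 1) + R.ι (δ (c k)) * R.D ^ k) :=
            Finset.sum_congr rfl fun k _ => h2 k
        _ = (∑ k ∈ Finset.range (i + 1), R.ι (c k) * R.D ^ (k + 1))
            + ∑ k ∈ Finset.range (i + 1), R.ι (δ (c k)) * R.D ^ k := Finset.sum_add_distrib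
        _ = ∑ k ∈ Finset.range (i + 2),
              R.ι ((if k = 0 then 0 else c (k - 1)) + (if k ≤ i then δ (c k) else 0)) * R.D ^ k := by
            rw [hsplit]
            congr 1
            · rw [Finset.sum_range_succ'
                (fun k => R.ι (if k = 0 then 0 else c (k - 1)) * R.D ^ k) (i + 1)]
              simp
            · conv_rhs => rw [Finset.sum_range_succ]
              have hni : ¬ (i + 1 ≤ i) := by omega
              rw [if_neg hni, map_zero, zero_mul, add_zero]
              exact Finset.sum_congr rfl fun k hk => by
                rw [if_pos (Nat.lt_succ_iff.mp (Finset.mem_range.1 hk))]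

lemma coeff_mono_mul (a b : K) (i j N : ℕ) (hN : i + j ≤ N) :
    R.coeff ((R.ι a * R.D ^ i) * (R.ι b * R.D ^ j)) N = if N = i + j then a * b else 0 := by
  obtain ⟨c, hci, hc⟩ := R.D_pow_mul b i
  have hrw : (R.ι a * R.D ^ i) * (R.ι b * R.D ^ j)
      = ∑ k ∈ Finset.range (i + 1), R.ι (a * c k) * R.D ^ (k + j) := by
    calc (R.ι a * R.D ^ i) * (R.ι b * R.D ^ j)
        = R.ι a * ((R.D ^ i * R.ι b) * R.D ^ j) := by
          rw [mul_assoc, mul_assoc]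
      _ = R.ι a * ((∑ k ∈ Finset.range (i + 1), R.ι (c k) * R.D ^ k) * R.D ^ j) := by rw [hc]
      _ = ∑ k ∈ Finset.range (i + 1), R.ι (a * c k) * R.D ^ (k + j) := by
          rw [Finset.sum_mul, Finset.mul_sum]
          exact Finset.sum_congr rfl fun k _ => by
            rw [map_mul, pow_add, mul_assoc, mul_assoc]
  rw [hrw, R.coeff_sum]
  rw [Finset.sum_congr rfl fun k _ => R.coeff_monomial (a * c k) (k + j) N]
  by_cases hNe : N = i + j
  · subst hNe
    rw [Finset.sum_eq_single i]
    · simp [hci]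
    · intro k _ hki
      have hne2 : ¬ (i + j = k + j) := fun h => hki (by omega)
      simp [hne2, Ne.symm hki]
    · intro h; exact absurd (Finset.self_mem_range_succ i) h
  · rw [if_neg hNe]
    apply Finset.sum_eq_zero
    intro k hk
    have hki : k ≤ i := Nat.lt_succ_iff.mp (Finset.mem_range.1 hk)
    have hne2 : ¬ (N = k + j) := by omega
    simp [hne2]

lemma coeff_mul_eq_zero (f g : S) {nf mg : ℕ} (hf : R.degD f ≤ (nf : WithBot ℕ))
    (hg : R.degD g ≤ (mg : WithBot ℕ)) {N : ℕ} (hN : nf + mg < N) :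
    R.coeff (f * g) N = 0 := by
  conv_lhs => rw [R.repr_sum f, R.repr_sum g]
  rw [Finset.sum_mul_sum, R.coeff_sum]
  apply Finset.sum_eq_zero
  intro p hp
  rw [R.coeff_sum]
  apply Finset.sum_eq_zero
  intro q hq
  have hpn : p ≤ nf := R.mem_supp_le hf hp
  have hqm : q ≤ mg := R.mem_supp_le hg hq
  rw [R.coeff_mono_mul _ _ _ _ _ (by omega : p + q ≤ N)]
  have hne2 : ¬ (N = p + q) := by omega
  simp [hne2]

lemma coeff_mul_top (f g : S) {nf mg : ℕ} (hf : R.degD f ≤ (nf : WithBot ℕ))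
    (hg : R.degD g ≤ (mg : WithBot ℕ)) :
    R.coeff (f * g) (nf + mg) = R.coeff f nf * R.coeff g mg := by
  conv_lhs => rw [R.repr_sum f, R.repr_sum g]
  rw [Finset.sum_mul_sum, R.coeff_sum]
  have hps : ∀ p ∈ R.supp f, p ≤ nf := fun p hp => R.mem_supp_le hf hp
  have hqs : ∀ q ∈ R.supp g, q ≤ mg := fun q hq => R.mem_supp_le hg hq
  have hinner : ∀ p, p ≤ nf →
      R.coeff (∑ q ∈ R.supp g,
        (R.ι (R.coeff f p) * R.D ^ p) * (R.ι (R.coeff g q) * R.D ^ q)) (nf + mg)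
      = if p = nf then R.coeff f nf * R.coeff g mg else 0 := by
    intro p hp
    rw [R.coeff_sum]
    by_cases hpe : p = nf
    · subst hpe
      rw [if_pos rfl, Finset.sum_eq_single mg]
      · rw [R.coeff_mono_mul _ _ _ _ _ (le_refl _), if_pos rfl]
      · intro q hq hqm'
        rw [R.coeff_mono_mul _ _ _ _ _ (by have := hqs q hq; omega)]
        have hne2 : ¬ (p + mg = p + q) := fun h => hqm' (by omega)
        simp [hne2, Ne.symm hqm']
      · intro hmg
        have hc0 : R.coeff g mg = 0 := by
          by_contra hc
          exact hmg ((R.mem_supp g mg).2 hc)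
        rw [R.coeff_mono_mul _ _ _ _ _ (le_refl _), hc0, mul_zero, if_pos rfl]
    · rw [if_neg hpe]
      apply Finset.sum_eq_zero
      intro q hq
      have hqm' := hqs q hq
      rw [R.coeff_mono_mul _ _ _ _ _ (by omega)]
      have hne2 : ¬ (nf + mg = p + q) := by omega
      simp [hne2]
  rw [Finset.sum_congr rfl fun p hp => hinner p (hps p hp)]
  by_cases hnf : nf ∈ R.supp f
  · rw [Finset.sum_eq_single nf]
    · rw [if_pos rfl]
    · intro p _ hpe; rw [if_neg hpe]
    · intro h; exact absurd hnf h
  · have hc0 : R.coeff f nf = 0 := by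
      by_contra hc
      exact hnf ((R.mem_supp f nf).2 hc)
    rw [hc0, zero_mul]
    apply Finset.sum_eq_zero
    intro p hp
    by_cases hpe : p = nf
    · subst hpe; exact absurd hp hnf
    · rw [if_neg hpe]


lemma natCast_le_natCast {a b : ℕ} : (a : WithBot ℕ) ≤ (b : WithBot ℕ) ↔ a ≤ b := by
  rw [Nat.cast_withBot, Nat.cast_withBot]
  exact WithBot.coe_le_coe

lemma natCast_lt_natCast {a b : ℕ} : (a : WithBot ℕ) < (b : WithBot ℕ) ↔ a < b := by
  rw [Nat.cast_withBot, Nat.cast_withBot]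
  exact WithBot.coe_lt_coe

end DiffPolyRing

/-- if `U·A = H` with `U` unimodular (inverse `V`), `H` in Hermite form,
and `deg_D A_{ij} ≤ d`, then `A = V·H` and `deg_D V_{ij} ≤ d`. -/
theorem degD_inverse_multiplier_le
    {F : Type} [Field F] [CharZero F] {S : Type} [Ring S]
    (δ : RatFunc F → RatFunc F)
    (hδadd : ∀ a b : RatFunc F, δ (a + b) = δ a + δ b)
    (hδmul : ∀ a b : RatFunc F, δ (a * b) = a * δ b + δ a * b)
    (R : DiffPolyRing (RatFunc F) S δ) {n : ℕ}
    (A U V H : Matrix (Fin n) (Fin n) S) (d : ℕ)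
    (hA : DiffPolyRing.FullRowRank A)
    (hdeg : ∀ i j, R.degD (A i j) ≤ (d : WithBot ℕ))
    (hUV : U * V = 1) (hVU : V * U = 1)
    (hUA : U * A = H) (hH : R.HermiteForm H) :
    A = V * H ∧ ∀ i j, R.degD (V i j) ≤ (d : WithBot ℕ) := by
  obtain ⟨hupper, hmonic, hoff⟩ := hH
  have hAVH : A = V * H := by
    rw [← hUA, ← mul_assoc, hVU, one_mul]
  refine ⟨hAVH, ?_⟩
  have key : ∀ j : ℕ, ∀ hj : j < n, ∀ i, R.degD (V i ⟨j, hj⟩) ≤ (d : WithBot ℕ) := by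
    intro j
    induction j using Nat.strong_induction_on with
    | _ j IH =>
      intro hj i
      by_contra hcon
      set jf : Fin n := ⟨j, hj⟩ with hjf
      have hV0 : V i jf ≠ 0 := by
        intro h
        rw [h, R.degD_zero] at hcon
        exact hcon bot_le
      obtain ⟨hdegV, hlcV⟩ := R.natDegD_spec hV0
      set N := R.natDegD (V i jf) with hNdef
      have hdN : d < N := by
        by_contra hle
        push_neg at hle
        apply hcon
        rw [hdegV]
        exact DiffPolyRing.natCast_le_natCast.mpr hle
      have hH0 : H jf jf ≠ 0 := R.monic_ne_zero (hmonic jf)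
      set m := R.natDegD (H jf jf) with hmdef
      have hHd : R.degD (H jf jf) = (m : WithBot ℕ) := (R.natDegD_spec hH0).1
      have hmon : R.coeff (H jf jf) m = 1 := hmonic jf
      have hAe : R.coeff (A i jf) (N + m) = ∑ k : Fin n, R.coeff (V i k * H k jf) (N + m) := by
        have hent : A i jf = ∑ k, V i k * H k jf := by rw [hAVH, Matrix.mul_apply]
        rw [hent, R.coeff_sum]
      have hzero : ∀ k : Fin n, k ≠ jf → R.coeff (V i k * H k jf) (N + m) = 0 := by
        intro k hk
        rcases lt_or_gt_of_ne hk with hlt | hgt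
        · have hVk : R.degD (V i k) ≤ (d : WithBot ℕ) := by
            have hkj : (k : ℕ) < j := hlt
            have := IH k.val hkj k.isLt i
            simpa using this
          by_cases hHk : H k jf = 0
          · rw [hHk, mul_zero, R.coeff_zero']
          · obtain ⟨hdk, -⟩ := R.natDegD_spec hHk
            have hmk : R.natDegD (H k jf) < m := by
              have h2 := hoff k jf hlt
              rw [hdk, hHd] at h2
              exact DiffPolyRing.natCast_lt_natCast.mp h2
            exact R.coeff_mul_eq_zero _ _ hVk (le_of_eq hdk) (by omega)
        · rw [hupper k jf hgt, mul_zero, R.coeff_zero']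
      have hdiag : R.coeff (V i jf * H jf jf) (N + m) = R.coeff (V i jf) N := by
        rw [R.coeff_mul_top _ _ (R.degD_le_natDegD _) (le_of_eq hHd), hmon, mul_one]
      have hsum : (∑ k : Fin n, R.coeff (V i k * H k jf) (N + m))
          = R.coeff (V i jf * H jf jf) (N + m) :=
        Finset.sum_eq_single jf (fun k _ hk => hzero k hk)
          (fun h => absurd (Finset.mem_univ jf) h)
      have hAc : R.coeff (A i jf) (N + m) = 0 :=
        R.coeff_eq_zero_of_degD_lt
          (lt_of_le_of_lt (hdeg i jf) (DiffPolyRing.natCast_lt_natCast.mpr (by omega)))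
      apply hlcV
      rw [← hdiag, ← hsum, ← hAe]
      exact hAc
  intro i j
  have := key j.val j.isLt i
  simpa using this
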